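/- Let z be a nonzero homogeneous element of degree ±1 in the first Weyl algebra A₁ (i.e., z ∈ D_1 or z ∈ D_{-1}, z ≠ 0). Then the centralizer of z in A₁ equals K[z]. -/

import Mathlib

/-- The defining relation of the first Weyl algebra: `p q = q p + 1`,
where `p` and `q` are the images of the generators `0` and `1`. -/
inductive WeylRel (K : Type) [Field K] :
    FreeAlgebra K (Fin 2) → FreeAlgebra K (Fin 2) → Prop
  | rel : WeylRel K (FreeAlgebra.ι K 0 * FreeAlgebra.ι K 1)
      (FreeAlgebra.ι K 1 * FreeAlgebra.ι K 0 + 1)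

/-- The first Weyl algebra `A₁` over `K`. -/
abbrev Weyl (K : Type) [Field K] := RingQuot (WeylRel K)

/-- The generator `p` of `A₁`. -/
noncomputable def Wp (K : Type) [Field K] : Weyl K :=
  RingQuot.mkAlgHom K (WeylRel K) (FreeAlgebra.ι K 0)

/-- The generator `q` of `A₁`. -/
noncomputable def Wq (K : Type) [Field K] : Weyl K :=
  RingQuot.mkAlgHom K (WeylRel K) (FreeAlgebra.ι K 1)

/-- The homogeneous component `D_t = span{p^i q^s : s - i = t}` of `A₁`. -/
noncomputable def WeylD (K : Type) [Field K] (t : ℤ) : Submodule K (Weyl K) :=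
  Submodule.span K {x | ∃ i s : ℕ, (s : ℤ) - (i : ℤ) = t ∧ x = Wp K ^ i * Wq K ^ s}

namespace WeylAux
open Polynomial

variable {K : Type} [Field K]

theorem wpq : Wp K * Wq K = Wq K * Wp K + 1 := by
  have := RingQuot.mkAlgHom_rel K (WeylRel.rel (K := K))
  simpa only [map_mul, map_add, map_one, Wp, Wq] using this

theorem wqp : Wq K * Wp K = Wp K * Wq K - 1 := by
  rw [wpq]; noncomm_ring

/-- `h = p q`. -/
noncomputable def Wh (K : Type) [Field K] : Weyl K := Wp K * Wq K

/-- `E f = f(h)`. -/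
noncomputable def WE (f : K[X]) : Weyl K := aeval (Wh K) f

theorem WE_mul (f g : K[X]) : WE (f * g) = WE f * WE g := map_mul _ _ _
theorem WE_add (f g : K[X]) : WE (f + g) = WE f + WE g := map_add _ _ _
theorem WE_sub (f g : K[X]) : WE (f - g) = WE f - WE g := map_sub _ _ _
theorem WE_X : WE (X : K[X]) = Wh K := aeval_X _
theorem WE_one : WE (1 : K[X]) = 1 := map_one _
theorem WE_zero : WE (0 : K[X]) = 0 := map_zero _
theorem WE_smul (c : K) (f : K[X]) : WE (c • f) = c • WE f := map_smul _ _ _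

/-- shift: `sh a f = f(X + a)`. -/
noncomputable def sh (a : K) (f : K[X]) : K[X] := f.comp (X + C a)

theorem sh_mul (a : K) (f g : K[X]) : sh a (f * g) = sh a f * sh a g := mul_comp ..
theorem sh_add (a : K) (f g : K[X]) : sh a (f + g) = sh a f + sh a g := add_comp ..
theorem sh_sub (a : K) (f g : K[X]) : sh a (f - g) = sh a f - sh a g := sub_comp ..
theorem sh_X (a : K) : sh a (X : K[X]) = X + C a := X_comp ..
theorem sh_C (a c : K) : sh a (C c) = C c := C_comp ..
theorem sh_one (a : K) : sh a (1 : K[X]) = 1 := one_comp ..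
theorem sh_zero (a : K) : sh a (0 : K[X]) = 0 := zero_comp ..
theorem sh_smul (a c : K) (f : K[X]) : sh a (c • f) = c • sh a f := smul_comp ..
theorem sh_sh (a b : K) (f : K[X]) : sh a (sh b f) = sh (a + b) f := by
  unfold sh
  rw [comp_assoc, add_comp, X_comp, C_comp, add_assoc, ← C_add, add_comm a b]
theorem sh_zero_shift (f : K[X]) : sh 0 f = f := by
  unfold sh; rw [map_zero, add_zero, comp_X]

theorem q_h : Wq K * Wh K = (Wh K - 1) * Wq K := by
  unfold Wh
  calc Wq K * (Wp K * Wq K) = (Wq K * Wp K) * Wq K := by noncomm_ring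
  _ = (Wp K * Wq K - 1) * Wq K := by rw [wqp]

theorem h_p : Wh K * Wp K = Wp K * (Wh K - 1) := by
  unfold Wh
  calc Wp K * Wq K * Wp K = Wp K * (Wq K * Wp K) := by noncomm_ring
  _ = Wp K * (Wp K * Wq K - 1) := by rw [wqp]

theorem q_hpow (n : ℕ) : Wq K * Wh K ^ n = (Wh K - 1) ^ n * Wq K := by
  induction n with
  | zero => simp
  | succ n ih =>
    rw [pow_succ, ← mul_assoc, ih, pow_succ]
    calc (Wh K - 1) ^ n * Wq K * Wh K = (Wh K - 1) ^ n * (Wq K * Wh K) := by noncomm_ring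
    _ = (Wh K - 1) ^ n * ((Wh K - 1) * Wq K) := by rw [q_h]
    _ = _ := by noncomm_ring

theorem hpow_p (n : ℕ) : Wh K ^ n * Wp K = Wp K * (Wh K - 1) ^ n := by
  induction n with
  | zero => simp
  | succ n ih =>
    rw [pow_succ, mul_assoc, h_p, ← mul_assoc, ih, pow_succ]
    noncomm_ring

theorem WE_sh (a : K) (f : K[X]) :
    WE (sh a f) = aeval (Wh K + algebraMap K (Weyl K) a) f := by
  unfold WE sh
  rw [aeval_comp, map_add, aeval_X, aeval_C]

theorem WE_sh_neg_one (f : K[X]) : WE (sh (-1) f) = aeval (Wh K - 1) f := by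
  rw [WE_sh, map_neg, map_one, ← sub_eq_add_neg]

theorem q_WE (f : K[X]) : Wq K * WE f = WE (sh (-1) f) * Wq K := by
  rw [WE_sh_neg_one]
  unfold WE
  induction f using Polynomial.induction_on' with
  | add f g hf hg => rw [map_add, map_add, mul_add, add_mul, hf, hg]
  | monomial n a =>
    rw [aeval_monomial, aeval_monomial, ← mul_assoc, ← Algebra.commutes, mul_assoc,
      q_hpow, ← mul_assoc]

theorem WE_p (f : K[X]) : WE f * Wp K = Wp K * WE (sh (-1) f) := by
  rw [WE_sh_neg_one]
  unfold WE
  induction f using Polynomial.induction_on' with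
  | add f g hf hg => rw [map_add, map_add, add_mul, mul_add, hf, hg]
  | monomial n a =>
    rw [aeval_monomial, aeval_monomial, mul_assoc, hpow_p, ← mul_assoc, Algebra.commutes,
      mul_assoc]

theorem p_WE (f : K[X]) : Wp K * WE f = WE (sh 1 f) * Wp K := by
  have := WE_p (K := K) (sh 1 f)
  rw [sh_sh, neg_add_cancel, sh_zero_shift] at this
  exact this.symm

theorem WE_q (f : K[X]) : WE f * Wq K = Wq K * WE (sh 1 f) := by
  have := q_WE (K := K) (sh 1 f)
  rw [sh_sh, neg_add_cancel, sh_zero_shift] at this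
  exact this.symm

theorem qpow_WE (s : ℕ) (f : K[X]) :
    Wq K ^ s * WE f = WE (sh (-(s : K)) f) * Wq K ^ s := by
  induction s with
  | zero => simp [sh_zero_shift]
  | succ s ih =>
    rw [pow_succ', mul_assoc, ih, ← mul_assoc, q_WE, sh_sh, mul_assoc, ← pow_succ']
    congr 2
    push_cast; ring

theorem WE_ppow (m : ℕ) (f : K[X]) :
    WE f * Wp K ^ m = Wp K ^ m * WE (sh (-(m : K)) f) := by
  induction m with
  | zero => simp [sh_zero_shift]
  | succ m ih =>
    rw [pow_succ, ← mul_assoc, ih, mul_assoc, WE_p, sh_sh, ← mul_assoc, ← pow_succ]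
    congr 3
    push_cast; ring

/-- `q * p^(m+1) = p^(m+1) * q - (m+1) • p^m`. -/
theorem q_ppow (m : ℕ) :
    Wq K * Wp K ^ (m + 1) = Wp K ^ (m + 1) * Wq K - ((m : K) + 1) • Wp K ^ m := by
  induction m with
  | zero =>
    rw [pow_one, pow_zero, wqp]
    norm_num
  | succ m ih =>
    rw [pow_succ, ← mul_assoc, ih, sub_mul, mul_assoc, wqp, smul_mul_assoc, ← pow_succ,
      mul_sub, mul_one, ← mul_assoc, ← pow_succ, sub_sub]
    congr 1
    nth_rewrite 1 [← one_smul K (Wp K ^ (m + 1))]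
    rw [← add_smul]
    congr 1
    push_cast; ring

/-- canonical form of degree `t ≥ 0`: `f(h) q^t`. -/
noncomputable def phi (t : ℕ) (f : K[X]) : Weyl K := WE f * Wq K ^ t

/-- canonical form of degree `-m ≤ 0`: `p^m f(h)`. -/
noncomputable def psi (m : ℕ) (f : K[X]) : Weyl K := Wp K ^ m * WE f

theorem phi_zero (t : ℕ) : phi (K := K) t 0 = 0 := by simp [phi, WE_zero]
theorem psi_zero (m : ℕ) : psi (K := K) m 0 = 0 := by simp [psi, WE_zero]
theorem phi_sub (t : ℕ) (f g : K[X]) : phi t (f - g) = phi (K := K) t f - phi t g := by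
  simp [phi, WE_sub, sub_mul]
theorem psi_sub (m : ℕ) (f g : K[X]) : psi m (f - g) = psi (K := K) m f - psi m g := by
  simp [psi, WE_sub, mul_sub]
theorem phi_smul (t : ℕ) (c : K) (f : K[X]) : phi t (c • f) = c • phi t f := by
  simp [phi, WE_smul, smul_mul_assoc]

/-- `f i` with `p^i q^i = f_i(h)`. -/
noncomputable def fpow (K : Type) [Field K] : ℕ → K[X]
  | 0 => 1
  | i + 1 => sh 1 (fpow K i) * X

theorem ppqq (i : ℕ) : Wp K ^ i * Wq K ^ i = WE (fpow K i) := by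
  induction i with
  | zero => simp [fpow, WE_one]
  | succ i ih =>
    have hWh : Wp K * Wq K = Wh K := rfl
    rw [pow_succ', pow_succ, mul_assoc, ← mul_assoc (Wp K ^ i), ih, ← mul_assoc, p_WE,
      mul_assoc, hWh, ← WE_X, ← WE_mul]
    rfl

theorem mem_phi_of_memD {t : ℕ} {u : Weyl K} (hu : u ∈ WeylD K (t : ℤ)) :
    ∃ f : K[X], u = phi t f := by
  let L : K[X] →ₗ[K] Weyl K :=
    (LinearMap.mulRight K (Wq K ^ t)).comp (Polynomial.aeval (Wh K)).toLinearMap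
  have : WeylD K (t : ℤ) ≤ LinearMap.range L := by
    rw [WeylD, Submodule.span_le]
    rintro x ⟨i, s, hst, rfl⟩
    have hs : s = i + t := by omega
    subst hs
    refine ⟨fpow K i, ?_⟩
    show WE (fpow K i) * Wq K ^ t = _
    rw [← ppqq, pow_add, mul_assoc]
  obtain ⟨f, hf⟩ := this hu
  exact ⟨f, hf.symm⟩

theorem mem_psi_of_memD {m : ℕ} {u : Weyl K} (hu : u ∈ WeylD K (-(m : ℤ))) :
    ∃ f : K[X], u = psi m f := by
  let L : K[X] →ₗ[K] Weyl K :=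
    (LinearMap.mulLeft K (Wp K ^ m)).comp (Polynomial.aeval (Wh K)).toLinearMap
  have : WeylD K (-(m : ℤ)) ≤ LinearMap.range L := by
    rw [WeylD, Submodule.span_le]
    rintro x ⟨i, s, hst, rfl⟩
    have hs : i = s + m := by omega
    subst hs
    refine ⟨fpow K s, ?_⟩
    show Wp K ^ m * WE (fpow K s) = _
    rw [← ppqq, add_comm s m, pow_add, mul_assoc]
  obtain ⟨f, hf⟩ := this hu
  exact ⟨f, hf.symm⟩

/-- The module `K[X, X⁻¹]`-ish: finitely supported functions on `ℤ`. -/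
abbrev LM (K : Type) [Field K] := ℤ →₀ K

/-- `q` acts as the shift `e_n ↦ e_{n+1}`. -/
noncomputable def QL (K : Type) [Field K] : LM K →ₗ[K] LM K :=
  Finsupp.lmapDomain K K (· + 1)

/-- `p` acts as `e_n ↦ n e_{n-1}`. -/
noncomputable def PL (K : Type) [Field K] : LM K →ₗ[K] LM K :=
  Finsupp.lsum K (fun n : ℤ => ((n : K) • Finsupp.lsingle (n - 1) : K →ₗ[K] LM K))

theorem QL_single (n : ℤ) (c : K) :
    QL K (Finsupp.single n c) = Finsupp.single (n + 1) c := by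
  rw [QL, Finsupp.lmapDomain_apply, Finsupp.mapDomain_single]

theorem PL_single (n : ℤ) (c : K) :
    PL K (Finsupp.single n c) = (n : K) • Finsupp.single (n - 1) c := by
  rw [PL, Finsupp.lsum_single, LinearMap.smul_apply, Finsupp.lsingle_apply]

theorem PQL_rel : PL K * QL K = QL K * PL K + 1 := by
  apply LinearMap.ext
  intro v
  induction v using Finsupp.induction_linear with
  | zero => rw [map_zero, map_zero]
  | add f g hf hg =>
    rw [map_add, map_add, hf, hg]
  | single n c =>
    rw [Module.End.mul_apply, LinearMap.add_apply, Module.End.mul_apply, Module.End.one_apply,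
      QL_single, PL_single, PL_single, map_smul, QL_single, add_sub_cancel_right,
      sub_add_cancel]
    rw [show ((n + 1 : ℤ) : K) = (n : K) + 1 by push_cast; ring, add_smul, one_smul]

/-- The representation of the Weyl algebra on `LM K`. -/
noncomputable def rep (K : Type) [Field K] : Weyl K →ₐ[K] Module.End K (LM K) :=
  RingQuot.liftAlgHom K
    ⟨FreeAlgebra.lift K ![PL K, QL K], by
      rintro x y ⟨⟩
      simp only [map_mul, map_add, map_one, FreeAlgebra.lift_ι_apply]
      show (PL K) * (QL K) = (QL K) * (PL K) + 1
      exact PQL_rel⟩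

theorem rep_p : rep K (Wp K) = PL K := by
  rw [Wp, rep, RingQuot.liftAlgHom_mkAlgHom_apply, FreeAlgebra.lift_ι_apply]
  rfl

theorem rep_q : rep K (Wq K) = QL K := by
  rw [Wq, rep, RingQuot.liftAlgHom_mkAlgHom_apply, FreeAlgebra.lift_ι_apply]
  rfl

theorem rep_qpow_single (t : ℕ) (n : ℤ) (c : K) :
    rep K (Wq K ^ t) (Finsupp.single n c) = Finsupp.single (n + t) c := by
  induction t generalizing n with
  | zero => rw [pow_zero, map_one, Module.End.one_apply]; norm_num
  | succ t ih =>
    rw [pow_succ, map_mul, Module.End.mul_apply]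
    rw [show rep K (Wq K) = QL K from rep_q, QL_single, ih]
    congr 1
    push_cast; ring

theorem rep_h_single (n : ℤ) (c : K) :
    rep K (Wh K) (Finsupp.single n c) = ((n + 1 : ℤ) : K) • Finsupp.single n c := by
  rw [Wh, map_mul, Module.End.mul_apply, rep_q, QL_single, rep_p, PL_single,
    add_sub_cancel_right]

theorem aeval_eigen {T : Module.End K (LM K)} {v : LM K} {lam : K}
    (hT : T v = lam • v) (f : K[X]) : (aeval T f) v = f.eval lam • v := by
  induction f using Polynomial.induction_on' with
  | add f g hf hg => rw [map_add, LinearMap.add_apply, hf, hg, eval_add, add_smul]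
  | monomial k a =>
    have hpow : ∀ j : ℕ, (T ^ j) v = lam ^ j • v := by
      intro j
      induction j with
      | zero => rw [pow_zero, pow_zero, one_smul, Module.End.one_apply]
      | succ j ihj =>
        rw [pow_succ', Module.End.mul_apply, ihj, map_smul, hT, smul_smul, mul_comm,
          ← pow_succ']
    rw [aeval_monomial, eval_monomial, Module.End.mul_apply, hpow, map_smul,
      Module.algebraMap_end_apply, smul_smul, mul_comm]

theorem rep_WE_single (f : K[X]) (n : ℤ) (c : K) :
    rep K (WE f) (Finsupp.single n c) = f.eval ((n + 1 : ℤ) : K) • Finsupp.single n c := by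
  rw [WE, ← aeval_algHom_apply]
  exact aeval_eigen (rep_h_single n c) f

theorem rep_ppow_single (m : ℕ) (n : ℤ) (c : K) :
    rep K (Wp K ^ m) (Finsupp.single n c) =
      ((∏ k ∈ Finset.range m, (n - k) : ℤ) : K) • Finsupp.single (n - m) c := by
  induction m with
  | zero =>
    rw [pow_zero, map_one, Module.End.one_apply, Finset.range_zero, Finset.prod_empty]
    norm_num
  | succ m ih =>
    rw [pow_succ', map_mul, Module.End.mul_apply, ih, map_smul, rep_p, PL_single,
      Finset.prod_range_succ, smul_smul]
    rw [show n - (m : ℤ) - 1 = n - ((m : ℕ) + 1 : ℕ) by push_cast; ring]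
    congr 1
    push_cast; ring

theorem rep_phi_single (t : ℕ) (f : K[X]) (n : ℤ) :
    rep K (phi t f) (Finsupp.single n 1) =
      f.eval ((n + t + 1 : ℤ) : K) • Finsupp.single (n + t) (1 : K) := by
  rw [phi, map_mul, Module.End.mul_apply, rep_qpow_single, rep_WE_single]

theorem rep_psi_single (m : ℕ) (f : K[X]) (n : ℤ) :
    rep K (psi m f) (Finsupp.single n 1) =
      (f.eval ((n + 1 : ℤ) : K) * ((∏ k ∈ Finset.range m, (n - k) : ℤ) : K)) •
        Finsupp.single (n - m) (1 : K) := by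
  rw [psi, map_mul, Module.End.mul_apply, rep_WE_single, map_smul, rep_ppow_single, smul_smul]

variable [CharZero K]

theorem poly_zero_of_int_roots (f : K[X]) (N : ℤ)
    (h : ∀ n : ℤ, N ≤ n → f.eval ((n : ℤ) : K) = 0) : f = 0 := by
  apply Polynomial.eq_zero_of_infinite_isRoot
  apply Set.infinite_of_injective_forall_mem (f := fun j : ℕ => ((N + j : ℤ) : K))
  · intro a b hab
    have : (N + a : ℤ) = N + b := Int.cast_injective hab
    omega
  · intro j
    exact h (N + j) (by omega)

theorem phi_inj' (t : ℕ) {f : K[X]}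
    (h : ∀ n : ℤ, rep K (phi t f) (Finsupp.single n 1) = 0) : f = 0 := by
  apply poly_zero_of_int_roots f 0
  intro M _
  have := h (M - t - 1)
  rw [rep_phi_single] at this
  rcases smul_eq_zero.mp this with h1 | h2
  · convert h1 using 3; omega
  · exact absurd h2 (fun hh => one_ne_zero (Finsupp.single_eq_zero.mp hh))

theorem psi_inj' (m : ℕ) {f : K[X]}
    (h : ∀ n : ℤ, rep K (psi m f) (Finsupp.single n 1) = 0) : f = 0 := by
  apply poly_zero_of_int_roots f (m + 1)
  intro M hM
  have := h (M - 1)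
  rw [rep_psi_single] at this
  rcases smul_eq_zero.mp this with h1 | h2
  · rcases mul_eq_zero.mp h1 with h3 | h4
    · convert h3 using 3; omega
    · exfalso
      apply Int.cast_ne_zero.mpr _ h4
      apply Finset.prod_ne_zero_iff.mpr
      intro k hk
      rw [Finset.mem_range] at hk
      omega
  · exact absurd h2 (fun hh => one_ne_zero (Finsupp.single_eq_zero.mp hh))

theorem phi_inj (t : ℕ) {f : K[X]} (h : phi t f = 0) : f = 0 :=
  phi_inj' t (fun n => by rw [h, map_zero]; rfl)

theorem psi_inj (m : ℕ) {f : K[X]} (h : psi m f = 0) : f = 0 :=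
  psi_inj' m (fun n => by rw [h, map_zero]; rfl)

theorem phi_cancel (t : ℕ) {f g : K[X]} (h : phi (K := K) t f = phi t g) : f = g := by
  have := phi_inj t (f := f - g) (by rw [phi_sub, h, sub_self])
  exact sub_eq_zero.mp this

theorem psi_cancel (m : ℕ) {f g : K[X]} (h : psi (K := K) m f = psi m g) : f = g := by
  have := psi_inj m (f := f - g) (by rw [psi_sub, h, sub_self])
  exact sub_eq_zero.mp this

theorem vanish_of_memD {d : ℤ} {u : Weyl K} (hu : u ∈ WeylD K d)
    (h : ∀ n : ℤ, rep K u (Finsupp.single n 1) = 0) : u = 0 := by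
  cases d with
  | ofNat t =>
    obtain ⟨f, rfl⟩ := mem_phi_of_memD (t := t) hu
    rw [phi_inj' t h, phi_zero]
  | negSucc m =>
    rw [Int.negSucc_eq] at hu
    obtain ⟨f, rfl⟩ := mem_psi_of_memD (m := m + 1) (by exact_mod_cast hu)
    rw [psi_inj' (m + 1) h, psi_zero]

theorem rep_memD {d : ℤ} {u : Weyl K} (hu : u ∈ WeylD K d) (n : ℤ) :
    ∃ a : K, rep K u (Finsupp.single n 1) = a • Finsupp.single (n + d) (1 : K) := by
  induction hu using Submodule.span_induction with
  | mem x hx =>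
    obtain ⟨i, s, hst, rfl⟩ := hx
    refine ⟨((∏ k ∈ Finset.range i, (n + s - k) : ℤ) : K), ?_⟩
    rw [map_mul, Module.End.mul_apply, rep_qpow_single, rep_ppow_single]
    congr 2
    omega
  | zero => exact ⟨0, by rw [map_zero, zero_smul]; rfl⟩
  | add x y _ _ hx hy =>
    obtain ⟨a, ha⟩ := hx
    obtain ⟨b, hb⟩ := hy
    exact ⟨a + b, by rw [map_add, LinearMap.add_apply, ha, hb, add_smul]⟩
  | smul c x _ hx =>
    obtain ⟨a, ha⟩ := hx
    exact ⟨c * a, by rw [map_smul, LinearMap.smul_apply, ha, smul_smul]⟩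

theorem direct (e : ℤ) (v : ℤ →₀ Weyl K) (hv : ∀ t, v t ∈ WeylD K (t + e))
    (hs : (v.sum fun _ x => x) = 0) (t₀ : ℤ) : v t₀ = 0 := by
  by_cases ht₀ : t₀ ∈ v.support
  case neg => exact Finsupp.notMem_support_iff.mp ht₀
  apply vanish_of_memD (hv t₀)
  intro n
  obtain ⟨a, ha⟩ := rep_memD (hv t₀) n
  rw [ha]
  have key : ∀ t : ℤ, ((rep K (v t) (Finsupp.single n 1)) (n + t₀ + e) : K)
      = if t = t₀ then a else 0 := by
    intro t
    obtain ⟨b, hb⟩ := rep_memD (hv t) n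
    by_cases ht : t = t₀
    · subst ht
      rw [ha, if_pos rfl, Finsupp.smul_apply, Finsupp.single_apply, if_pos (by omega),
        smul_eq_mul, mul_one]
    · rw [hb, if_neg ht, Finsupp.smul_apply, Finsupp.single_apply, if_neg (by omega),
        smul_eq_mul, mul_zero]
  have hzero : a = 0 := by
    have h0 : (rep K ((v.sum fun _ x => x)) (Finsupp.single n 1)) (n + t₀ + e) = 0 := by
      rw [hs, map_zero]
      rfl
    rw [map_finsuppSum] at h0
    rw [LinearMap.finsupp_sum_apply, Finsupp.sum_apply] at h0
    rw [Finsupp.sum, Finset.sum_eq_single t₀ (fun t _ ht => by rw [key t, if_neg ht])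
      (fun h => absurd ht₀ h)] at h0
    rw [key t₀, if_pos rfl] at h0
    exact h0
  rw [hzero, zero_smul]

omit [CharZero K] in
theorem mem_D_gen {i s : ℕ} {t : ℤ} (h : (s : ℤ) - i = t) :
    Wp K ^ i * Wq K ^ s ∈ WeylD K t :=
  Submodule.subset_span ⟨i, s, h, rfl⟩

omit [CharZero K] in
theorem memD_mul_q {c : ℤ} {x : Weyl K} (hx : x ∈ WeylD K c) :
    x * Wq K ∈ WeylD K (c + 1) := by
  induction hx using Submodule.span_induction with
  | mem x hx =>
    obtain ⟨i, s, hst, rfl⟩ := hx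
    rw [mul_assoc, ← pow_succ]
    exact mem_D_gen (by omega)
  | zero => rw [zero_mul]; exact Submodule.zero_mem _
  | add x y _ _ hx hy => rw [add_mul]; exact Submodule.add_mem _ hx hy
  | smul c' x _ hx => rw [smul_mul_assoc]; exact Submodule.smul_mem _ _ hx

omit [CharZero K] in
theorem memD_p_mul {c : ℤ} {x : Weyl K} (hx : x ∈ WeylD K c) :
    Wp K * x ∈ WeylD K (c - 1) := by
  induction hx using Submodule.span_induction with
  | mem x hx =>
    obtain ⟨i, s, hst, rfl⟩ := hx
    rw [← mul_assoc, ← pow_succ']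
    exact mem_D_gen (by omega)
  | zero => rw [mul_zero]; exact Submodule.zero_mem _
  | add x y _ _ hx hy => rw [mul_add]; exact Submodule.add_mem _ hx hy
  | smul c' x _ hx => rw [mul_smul_comm]; exact Submodule.smul_mem _ _ hx

omit [CharZero K] in
theorem memD_mul_qpow {c : ℤ} {x : Weyl K} (u : ℕ) (hx : x ∈ WeylD K c) :
    x * Wq K ^ u ∈ WeylD K (c + u) := by
  induction u with
  | zero => simpa using hx
  | succ u ih =>
    have := memD_mul_q ih
    rw [mul_assoc, ← pow_succ] at this
    convert this using 2
    all_goals omega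

omit [CharZero K] in
theorem memD_ppow_mul {c : ℤ} {x : Weyl K} (i : ℕ) (hx : x ∈ WeylD K c) :
    Wp K ^ i * x ∈ WeylD K (c - i) := by
  induction i with
  | zero => simpa using hx
  | succ i ih =>
    have := memD_p_mul ih
    rw [← mul_assoc, ← pow_succ'] at this
    convert this using 2
    all_goals omega

omit [CharZero K] in
theorem qpow_ppow_mem (s : ℕ) : ∀ j : ℕ, Wq K ^ s * Wp K ^ j ∈ WeylD K ((s : ℤ) - j) := by
  induction s with
  | zero =>
    intro j
    rw [pow_zero, one_mul]
    have := mem_D_gen (K := K) (i := j) (s := 0) (t := 0 - (j : ℤ)) (by omega)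
    rw [pow_zero, mul_one] at this
    convert this using 2
    all_goals omega
  | succ s ih =>
    intro j
    cases j with
    | zero =>
      rw [pow_zero, mul_one]
      have := mem_D_gen (K := K) (i := 0) (s := s + 1) (t := ((s+1 : ℕ) : ℤ) - 0) (by omega)
      rw [pow_zero, one_mul] at this
      convert this using 2
      all_goals push_cast; ring
    | succ m =>
      rw [pow_succ, mul_assoc, q_ppow, mul_sub, ← mul_assoc, mul_smul_comm]
      apply Submodule.sub_mem
      · have := memD_mul_q (ih (m + 1))
        convert this using 2
        push_cast; ring
      · apply Submodule.smul_mem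
        have := ih m
        convert this using 2
        push_cast; omega

omit [CharZero K] in
theorem memD_mul {a b : ℤ} {x y : Weyl K} (hx : x ∈ WeylD K a) (hy : y ∈ WeylD K b) :
    x * y ∈ WeylD K (a + b) := by
  induction hx using Submodule.span_induction generalizing y with
  | mem x hx =>
    obtain ⟨i, s, hst, rfl⟩ := hx
    induction hy using Submodule.span_induction with
    | mem y hy =>
      obtain ⟨j, u, hju, rfl⟩ := hy
      have h1 := qpow_ppow_mem (K := K) s j
      have h2 := memD_mul_qpow u h1
      have h3 := memD_ppow_mul i h2
      have heq : Wp K ^ i * Wq K ^ s * (Wp K ^ j * Wq K ^ u)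
          = Wp K ^ i * (Wq K ^ s * Wp K ^ j * Wq K ^ u) := by noncomm_ring
      rw [heq]
      convert h3 using 2
      omega
    | zero => rw [mul_zero]; exact Submodule.zero_mem _
    | add y z _ _ hy hz => rw [mul_add]; exact Submodule.add_mem _ hy hz
    | smul c' y _ hy => rw [mul_smul_comm]; exact Submodule.smul_mem _ _ hy
  | zero => rw [zero_mul]; exact Submodule.zero_mem _
  | add x x' _ _ hx hx' => rw [add_mul]; exact Submodule.add_mem _ (hx hy) (hx' hy)
  | smul c' x _ hx => rw [smul_mul_assoc]; exact Submodule.smul_mem _ _ (hx hy)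

omit [CharZero K] in
theorem memTop_mul {x y : Weyl K} (hx : x ∈ ⨆ t : ℤ, WeylD K t)
    (hy : y ∈ ⨆ t : ℤ, WeylD K t) : x * y ∈ ⨆ t : ℤ, WeylD K t := by
  rw [Submodule.mem_iSup_iff_exists_finsupp] at hx hy
  obtain ⟨c, hc, rfl⟩ := hx
  obtain ⟨d, hd, rfl⟩ := hy
  rw [Finsupp.sum_mul]
  apply Submodule.finsuppSum_mem
  intro t _
  rw [Finsupp.mul_sum]
  apply Submodule.finsuppSum_mem
  intro t' _
  exact le_iSup (fun t : ℤ => WeylD K t) (t + t') (memD_mul (hc t) (hd t'))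

theorem top_mem (w : Weyl K) : w ∈ ⨆ t : ℤ, WeylD K t := by
  obtain ⟨y, rfl⟩ := RingQuot.mkAlgHom_surjective K (WeylRel K) w
  induction y using FreeAlgebra.induction with
  | grade0 r =>
    rw [AlgHom.commutes, Algebra.algebraMap_eq_smul_one]
    apply Submodule.smul_mem
    apply le_iSup (fun t : ℤ => WeylD K t) 0
    have := mem_D_gen (K := K) (i := 0) (s := 0) (t := 0) (by omega)
    simpa using this
  | grade1 i =>
    fin_cases i
    · apply le_iSup (fun t : ℤ => WeylD K t) (-1)
      have := mem_D_gen (K := K) (i := 1) (s := 0) (t := -1) (by omega)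
      simpa [Wp] using this
    · apply le_iSup (fun t : ℤ => WeylD K t) 1
      have := mem_D_gen (K := K) (i := 0) (s := 1) (t := 1) (by omega)
      simpa [Wq] using this
  | mul a b ha hb =>
    rw [map_mul]
    exact memTop_mul ha hb
  | add a b ha hb =>
    rw [map_add]
    exact Submodule.add_mem _ ha hb

omit [CharZero K] in
theorem monic_sh {p : K[X]} (hp : p.Monic) (a : K) : (sh a p).Monic :=
  hp.comp_X_add_C a

omit [CharZero K] in
theorem natDegree_sh (a : K) (p : K[X]) : (sh a p).natDegree = p.natDegree := by
  unfold sh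
  rw [natDegree_comp, natDegree_X_add_C, mul_one]

omit [CharZero K] in
theorem sh_ne_zero {p : K[X]} (hp : p ≠ 0) (a : K) : sh a p ≠ 0 := by
  intro h
  apply hp
  have := congrArg (sh (-a)) h
  rw [sh_sh, neg_add_cancel, sh_zero_shift, sh_zero] at this
  exact this

omit [CharZero K] in
theorem nextCoeff_one' : (1 : K[X]).nextCoeff = 0 := by
  simp [nextCoeff]

omit [CharZero K] in
theorem nextCoeff_X' : (X : K[X]).nextCoeff = 0 := by
  have := nextCoeff_X_sub_C (0 : K)
  simpa using this

theorem nextCoeff_sh {p : K[X]} (hp : p.Monic) (a : K) :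
    (sh a p).nextCoeff = p.nextCoeff + p.natDegree * a := by
  by_cases h0 : p.natDegree = 0
  · rw [hp.natDegree_eq_zero] at h0
    subst h0
    rw [sh_one, nextCoeff_one']
    simp [nextCoeff_one']
  · have hd : 0 < p.natDegree := Nat.pos_of_ne_zero h0
    set d := p.natDegree with hdd
    have h1 : sh a p = taylor a p := (taylor_apply a p).symm
    rw [nextCoeff_of_natDegree_pos (by rw [natDegree_sh]; exact hd), natDegree_sh, h1,
      taylor_coeff, nextCoeff_of_natDegree_pos hd]
    have key : hasseDeriv (d - 1) p = C (p.coeff (d - 1)) + C ((d : K)) * X := by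
      ext n
      rw [hasseDeriv_coeff, coeff_add, coeff_C, coeff_C_mul, coeff_X]
      match n with
      | 0 =>
        have : 0 + (d - 1) = d - 1 := by omega
        rw [this, Nat.choose_self]
        norm_num
      | 1 =>
        have h2 : 1 + (d - 1) = d := by omega
        rw [h2]
        have h3 : d.choose (d - 1) = d := by
          have := Nat.choose_succ_self_right (d - 1)
          rw [show d - 1 + 1 = d by omega] at this
          exact this
        rw [h3, hp.coeff_natDegree]
        norm_num
      | (n + 2) =>
        have h4 : p.coeff (n + 2 + (d - 1)) = 0 :=
          coeff_eq_zero_of_natDegree_lt (by omega)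
        rw [h4]
        norm_num
    rw [key, eval_add, eval_C, eval_mul, eval_C, eval_X]

theorem L1_deg {g f : K[X]} (hg : g ≠ 0) (hf : f ≠ 0) (t : ℕ)
    (h : g * sh (-1) f = f * sh (-(t : K)) g) : f.natDegree = t * g.natDegree := by
  have hlf : f.leadingCoeff ≠ 0 := leadingCoeff_ne_zero.mpr hf
  have hlg : g.leadingCoeff ≠ 0 := leadingCoeff_ne_zero.mpr hg
  set f' := f * C f.leadingCoeff⁻¹ with hf'def
  set g' := g * C g.leadingCoeff⁻¹ with hg'def
  have hf' : f'.Monic := monic_mul_leadingCoeff_inv hf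
  have hg' : g'.Monic := monic_mul_leadingCoeff_inv hg
  have h' : g' * sh (-1) f' = f' * sh (-(t : K)) g' := by
    rw [hf'def, hg'def, sh_mul, sh_C, sh_mul, sh_C]
    linear_combination (C f.leadingCoeff⁻¹ * C g.leadingCoeff⁻¹ : K[X]) * h
  have hnc := congrArg nextCoeff h'
  rw [Monic.nextCoeff_mul hg' (monic_sh hf' _), Monic.nextCoeff_mul hf' (monic_sh hg' _),
    nextCoeff_sh hf', nextCoeff_sh hg'] at hnc
  have hdf : f'.natDegree = f.natDegree := natDegree_mul_C (inv_ne_zero hlf)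
  have hdg : g'.natDegree = g.natDegree := natDegree_mul_C (inv_ne_zero hlg)
  have : ((f.natDegree : K)) = ((t * g.natDegree : ℕ) : K) := by
    rw [hdf, hdg] at hnc
    push_cast
    linear_combination -hnc
  exact_mod_cast this

theorem L1 {g f f₀ : K[X]} (hg : g ≠ 0) (t : ℕ)
    (h : g * sh (-1) f = f * sh (-(t : K)) g)
    (h₀ : g * sh (-1) f₀ = f₀ * sh (-(t : K)) g) (hf₀ : f₀ ≠ 0) :
    ∃ c : K, f = c • f₀ := by
  by_cases hf : f = 0
  · exact ⟨0, by rw [hf, zero_smul]⟩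
  set c := f.leadingCoeff * f₀.leadingCoeff⁻¹ with hc
  set r := f - C c * f₀ with hr
  have hrsol : g * sh (-1) r = r * sh (-(t : K)) g := by
    rw [hr, sh_sub, sh_mul, sh_C]
    linear_combination h - (C c : K[X]) * h₀
  by_cases hr0 : r = 0
  · refine ⟨c, ?_⟩
    have : f = C c * f₀ := by
      have := sub_eq_zero.mp hr0
      linear_combination this
    rw [this, smul_eq_C_mul]
  · exfalso
    have hdr : r.natDegree = t * g.natDegree := L1_deg hg hr0 t hrsol
    have hdf : f.natDegree = t * g.natDegree := L1_deg hg hf t h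
    have hdf₀ : f₀.natDegree = t * g.natDegree := L1_deg hg hf₀ t h₀
    have hlr : r.leadingCoeff = 0 := by
      rw [leadingCoeff, hdr, hr, coeff_sub, coeff_C_mul]
      rw [show t * g.natDegree = f.natDegree from hdf.symm]
      rw [leadingCoeff] at hc
      have : f₀.coeff f.natDegree = f₀.leadingCoeff := by
        rw [leadingCoeff, hdf₀, ← hdf]
      have hlf0 : f₀.leadingCoeff ≠ 0 := leadingCoeff_ne_zero.mpr hf₀
      rw [leadingCoeff] at hlf0
      rw [this, hc, leadingCoeff, mul_assoc, inv_mul_cancel₀ hlf0, mul_one, sub_self]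
    exact leadingCoeff_ne_zero.mpr hr0 hlr

theorem L2 {g f : K[X]} (hg : g ≠ 0) (m : ℕ)
    (h : sh (-(m : K)) g * f * (X - C ((m : K) + 1)) = sh 1 f * sh 1 g * X) : f = 0 := by
  by_contra hf
  have hlf : f.leadingCoeff ≠ 0 := leadingCoeff_ne_zero.mpr hf
  have hlg : g.leadingCoeff ≠ 0 := leadingCoeff_ne_zero.mpr hg
  set f' := f * C f.leadingCoeff⁻¹ with hf'def
  set g' := g * C g.leadingCoeff⁻¹ with hg'def
  have hf' : f'.Monic := monic_mul_leadingCoeff_inv hf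
  have hg' : g'.Monic := monic_mul_leadingCoeff_inv hg
  have h' : sh (-(m : K)) g' * f' * (X - C ((m : K) + 1)) = sh 1 f' * sh 1 g' * X := by
    rw [hf'def, hg'def, sh_mul, sh_C, sh_mul, sh_C, sh_mul, sh_C]
    linear_combination (C f.leadingCoeff⁻¹ * C g.leadingCoeff⁻¹ : K[X]) * h
  have hnc := congrArg nextCoeff h'
  rw [Monic.nextCoeff_mul ((monic_sh hg' _).mul hf') (monic_X_sub_C _),
    Monic.nextCoeff_mul (monic_sh hg' _) hf',
    Monic.nextCoeff_mul ((monic_sh hf' _).mul (monic_sh hg' _)) monic_X,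
    Monic.nextCoeff_mul (monic_sh hf' _) (monic_sh hg' _),
    nextCoeff_sh hf', nextCoeff_sh hg', nextCoeff_sh hg', nextCoeff_X_sub_C,
    nextCoeff_X'] at hnc
  have hzero : ((f'.natDegree + g'.natDegree * (m + 1) + (m + 1) : ℕ) : K) = 0 := by
    push_cast
    linear_combination -hnc
  rw [Nat.cast_eq_zero] at hzero
  omega

omit [CharZero K] in
theorem psi_smul (m : ℕ) (c : K) (f : K[X]) : psi m (c • f) = c • psi (K := K) m f := by
  simp [psi, WE_smul, mul_smul_comm]

omit [CharZero K] in
theorem A1 (g f : K[X]) (t : ℕ) : phi 1 g * phi t f = phi (t + 1) (g * sh (-1) f) := by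
  unfold phi
  calc (WE g * Wq K ^ 1) * (WE f * Wq K ^ t)
      = WE g * ((Wq K * WE f) * Wq K ^ t) := by rw [pow_one]; noncomm_ring
    _ = WE g * ((WE (sh (-1) f) * Wq K) * Wq K ^ t) := by rw [q_WE]
    _ = (WE g * WE (sh (-1) f)) * (Wq K * Wq K ^ t) := by noncomm_ring
    _ = WE (g * sh (-1) f) * Wq K ^ (t + 1) := by rw [← WE_mul, ← pow_succ']

omit [CharZero K] in
theorem A2 (g f : K[X]) (t : ℕ) : phi t f * phi 1 g = phi (t + 1) (f * sh (-(t : K)) g) := by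
  unfold phi
  calc (WE f * Wq K ^ t) * (WE g * Wq K ^ 1)
      = WE f * ((Wq K ^ t * WE g) * Wq K ^ 1) := by noncomm_ring
    _ = WE f * ((WE (sh (-(t : K)) g) * Wq K ^ t) * Wq K ^ 1) := by rw [qpow_WE]
    _ = (WE f * WE (sh (-(t : K)) g)) * (Wq K ^ t * Wq K) := by rw [pow_one]; noncomm_ring
    _ = WE (f * sh (-(t : K)) g) * Wq K ^ (t + 1) := by rw [← WE_mul, ← pow_succ]

omit [CharZero K] in
theorem A3 (g f : K[X]) (m : ℕ) :
    phi 1 g * psi (m + 1) f = psi m (sh (-(m : K)) g * f * (X - C ((m : K) + 1))) := by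
  have e1 : phi 1 g * psi (m + 1) f
      = (WE g * Wp K ^ (m+1)) * (Wq K * WE f)
        - ((m : K) + 1) • ((WE g * Wp K ^ m) * WE f) := by
    unfold phi psi
    rw [pow_one]
    calc (WE g * Wq K) * (Wp K ^ (m+1) * WE f)
        = WE g * (Wq K * Wp K ^ (m+1)) * WE f := by noncomm_ring
      _ = WE g * (Wp K ^ (m+1) * Wq K - ((m : K)+1) • Wp K ^ m) * WE f := by rw [q_ppow]
      _ = _ := by
          rw [mul_sub, sub_mul, mul_smul_comm, smul_mul_assoc]
          noncomm_ring
  rw [e1, WE_ppow, WE_ppow, q_WE]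
  have e2 : (Wp K ^ (m+1) * WE (sh (-((m:ℕ)+1 : ℕ) : K) g)) * (WE (sh (-1) f) * Wq K)
      = psi m (sh (-(m : K)) g * f * X) := by
    unfold psi
    calc (Wp K ^ (m+1) * WE (sh (-((m:ℕ)+1 : ℕ) : K) g)) * (WE (sh (-1) f) * Wq K)
        = Wp K ^ m * ((Wp K * WE (sh (-((m:ℕ)+1 : ℕ) : K) g * sh (-1) f)) * Wq K) := by
          rw [WE_mul]; rw [pow_succ]; noncomm_ring
      _ = Wp K ^ m * ((WE (sh 1 (sh (-((m:ℕ)+1 : ℕ) : K) g * sh (-1) f)) * Wp K) * Wq K) := by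
          rw [p_WE]
      _ = Wp K ^ m * (WE (sh 1 (sh (-((m:ℕ)+1 : ℕ) : K) g * sh (-1) f)) * Wh K) := by
          rw [Wh]; noncomm_ring
      _ = Wp K ^ m * WE (sh 1 (sh (-((m:ℕ)+1 : ℕ) : K) g * sh (-1) f) * X) := by
          rw [WE_mul, WE_X]
      _ = _ := by
          rw [sh_mul, sh_sh, sh_sh, show (1 : K) + -1 = 0 by ring, sh_zero_shift]
          congr 4
          all_goals push_cast; ring
  rw [e2]
  have e3 : ((m : K) + 1) • ((Wp K ^ m * WE (sh (-(m : ℕ) : K) g)) * WE f)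
      = ((m : K) + 1) • psi m (sh (-(m : K)) g * f) := by
    unfold psi
    rw [WE_mul]
    congr 1
    noncomm_ring
  rw [e3, ← psi_smul, ← psi_sub]
  congr 1
  rw [smul_eq_C_mul]
  ring

omit [CharZero K] in
theorem A4 (g f : K[X]) (m : ℕ) :
    psi (m + 1) f * phi 1 g = psi m (sh 1 f * sh 1 g * X) := by
  unfold phi psi
  rw [pow_one]
  calc (Wp K ^ (m+1) * WE f) * (WE g * Wq K)
      = Wp K ^ m * ((Wp K * WE (f * g)) * Wq K) := by rw [WE_mul, pow_succ]; noncomm_ring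
    _ = Wp K ^ m * ((WE (sh 1 (f * g)) * Wp K) * Wq K) := by rw [p_WE]
    _ = Wp K ^ m * (WE (sh 1 (f * g)) * Wh K) := by rw [Wh]; noncomm_ring
    _ = Wp K ^ m * WE (sh 1 (f * g) * X) := by rw [WE_mul, WE_X]
    _ = _ := by rw [sh_mul]

omit [CharZero K] in
theorem B1 (g f : K[X]) (m : ℕ) :
    psi 1 g * psi m f = psi (m + 1) (sh (-(m : K)) g * f) := by
  unfold psi
  rw [pow_one, WE_mul]
  calc (Wp K * WE g) * (Wp K ^ m * WE f)
      = Wp K * ((WE g * Wp K ^ m) * WE f) := by noncomm_ring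
    _ = Wp K * ((Wp K ^ m * WE (sh (-(m : K)) g)) * WE f) := by rw [WE_ppow]
    _ = (Wp K * Wp K ^ m) * (WE (sh (-(m : K)) g) * WE f) := by noncomm_ring
    _ = Wp K ^ (m + 1) * (WE (sh (-(m : K)) g) * WE f) := by rw [← pow_succ']

omit [CharZero K] in
theorem B2 (g f : K[X]) (m : ℕ) :
    psi m f * psi 1 g = psi (m + 1) (sh (-1) f * g) := by
  unfold psi
  rw [pow_one, WE_mul]
  calc (Wp K ^ m * WE f) * (Wp K * WE g)
      = Wp K ^ m * ((WE f * Wp K) * WE g) := by noncomm_ring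
    _ = Wp K ^ m * ((Wp K * WE (sh (-1) f)) * WE g) := by rw [WE_p]
    _ = (Wp K ^ m * Wp K) * (WE (sh (-1) f) * WE g) := by noncomm_ring
    _ = Wp K ^ (m + 1) * (WE (sh (-1) f) * WE g) := by rw [← pow_succ]

omit [CharZero K] in
theorem B3 (g f : K[X]) (t : ℕ) :
    psi 1 g * phi (t + 1) f = phi t (sh 1 g * sh 1 f * X) := by
  unfold phi psi
  rw [pow_one]
  calc (Wp K * WE g) * (WE f * Wq K ^ (t+1))
      = (Wp K * WE (g * f)) * (Wq K * Wq K ^ t) := by rw [WE_mul, pow_succ']; noncomm_ring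
    _ = ((WE (sh 1 (g * f)) * Wp K) * Wq K) * Wq K ^ t := by rw [p_WE]; noncomm_ring
    _ = (WE (sh 1 (g * f)) * Wh K) * Wq K ^ t := by rw [Wh]; noncomm_ring
    _ = WE (sh 1 (g * f) * X) * Wq K ^ t := by rw [WE_mul, WE_X]
    _ = _ := by rw [sh_mul]

omit [CharZero K] in
theorem B4 (g f : K[X]) (t : ℕ) :
    phi (t + 1) f * psi 1 g = phi t (f * (X - C ((t : K) + 1)) * sh (-(t : K)) g) := by
  unfold phi psi
  rw [pow_one]
  have hqp : Wq K * Wp K = WE ((X : K[X]) - 1) := by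
    rw [WE_sub, WE_X, WE_one, wqp, Wh]
  calc (WE f * Wq K ^ (t+1)) * (Wp K * WE g)
      = WE f * (Wq K ^ t * ((Wq K * Wp K) * WE g)) := by rw [pow_succ]; noncomm_ring
    _ = WE f * (Wq K ^ t * WE (((X : K[X]) - 1) * g)) := by rw [hqp, ← WE_mul]
    _ = WE f * (WE (sh (-(t : K)) (((X : K[X]) - 1) * g)) * Wq K ^ t) := by rw [qpow_WE]
    _ = WE (f * sh (-(t : K)) (((X : K[X]) - 1) * g)) * Wq K ^ t := by
        rw [WE_mul]; noncomm_ring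
    _ = _ := by
        congr 2
        rw [sh_mul, sh_sub, sh_X, sh_one, C_neg, C_add, C_1]
        ring

/-- `z^t = phi t (Gt g t)` for `z = g(h) q`. -/
noncomputable def Gt (g : K[X]) : ℕ → K[X]
  | 0 => 1
  | t + 1 => Gt g t * sh (-(t : K)) g

omit [CharZero K] in
theorem zpow_phi (g : K[X]) (t : ℕ) : (phi 1 g) ^ t = phi t (Gt g t) := by
  induction t with
  | zero => rw [pow_zero, Gt, phi, pow_zero, mul_one, WE_one]
  | succ t ih => rw [pow_succ, ih, A2, Gt]

omit [CharZero K] in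
theorem Gt_ne_zero {g : K[X]} (hg : g ≠ 0) (t : ℕ) : Gt g t ≠ 0 := by
  induction t with
  | zero => exact one_ne_zero
  | succ t ih => exact mul_ne_zero ih (sh_ne_zero hg _)

/-- `z^m = psi m (Fm g m)` for `z = p g(h)`. -/
noncomputable def Fm (g : K[X]) : ℕ → K[X]
  | 0 => 1
  | m + 1 => sh (-1) (Fm g m) * g

omit [CharZero K] in
theorem zpow_psi (g : K[X]) (m : ℕ) : (psi 1 g) ^ m = psi m (Fm g m) := by
  induction m with
  | zero => rw [pow_zero, Fm, psi, pow_zero, one_mul, WE_one]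
  | succ m ih => rw [pow_succ, ih, B2, Fm]

omit [CharZero K] in
theorem Fm_ne_zero {g : K[X]} (hg : g ≠ 0) (m : ℕ) : Fm g m ≠ 0 := by
  induction m with
  | zero => exact one_ne_zero
  | succ m ih => exact mul_ne_zero (sh_ne_zero ih _) hg

theorem compA {g : K[X]} (hg : g ≠ 0) {t : ℤ} {u : Weyl K} (hu : u ∈ WeylD K t)
    (hcomm : phi 1 g * u = u * phi 1 g) : u ∈ Algebra.adjoin K {phi (K := K) 1 g} := by
  cases t with
  | ofNat n =>
    obtain ⟨f, rfl⟩ := mem_phi_of_memD (t := n) hu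
    rw [A1, A2] at hcomm
    have heq := phi_cancel _ hcomm
    have hzz : phi 1 g * (phi 1 g : Weyl K) ^ n = (phi 1 g : Weyl K) ^ n * phi 1 g := by
      rw [← pow_succ', ← pow_succ]
    rw [zpow_phi, A1, A2] at hzz
    have hGt := phi_cancel _ hzz
    obtain ⟨c, hc⟩ := L1 hg n heq hGt (Gt_ne_zero hg n)
    rw [hc, phi_smul, ← zpow_phi]
    exact Subalgebra.smul_mem _ (Subalgebra.pow_mem _ (Algebra.self_mem_adjoin_singleton K _) n) c
  | negSucc m =>
    rw [Int.negSucc_eq] at hu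
    obtain ⟨f, rfl⟩ := mem_psi_of_memD (m := m + 1) (by exact_mod_cast hu)
    rw [A3, A4] at hcomm
    have heq := psi_cancel _ hcomm
    rw [L2 hg m heq, psi_zero]
    exact zero_mem _

theorem compB {g : K[X]} (hg : g ≠ 0) {t : ℤ} {u : Weyl K} (hu : u ∈ WeylD K t)
    (hcomm : psi 1 g * u = u * psi 1 g) : u ∈ Algebra.adjoin K {psi (K := K) 1 g} := by
  rcases lt_or_ge 0 t with ht | ht
  · -- t = n + 1 > 0 : no nonzero solutions
    obtain ⟨n, rfl⟩ : ∃ n : ℕ, t = ((n + 1 : ℕ) : ℤ) :=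
      ⟨(t - 1).toNat, by omega⟩
    obtain ⟨f, rfl⟩ := mem_phi_of_memD (t := n + 1) hu
    rw [B3, B4] at hcomm
    have heq := phi_cancel _ hcomm
    have heq' : sh (-(n : K)) g * f * (X - C ((n : K) + 1)) = sh 1 f * sh 1 g * X := by
      linear_combination -heq
    rw [L2 hg n heq', phi_zero]
    exact zero_mem _
  · -- t = -m ≤ 0
    obtain ⟨m, rfl⟩ : ∃ m : ℕ, t = -(m : ℤ) := ⟨(-t).toNat, by omega⟩
    obtain ⟨f, rfl⟩ := mem_psi_of_memD (m := m) hu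
    rw [B1, B2] at hcomm
    have heq := psi_cancel _ hcomm
    have heq' : g * sh (-1) f = f * sh (-(m : K)) g := by
      linear_combination -heq
    have hzz : psi 1 g * (psi 1 g : Weyl K) ^ m = (psi 1 g : Weyl K) ^ m * psi 1 g := by
      rw [← pow_succ', ← pow_succ]
    rw [zpow_psi, B1, B2] at hzz
    have hFm' := psi_cancel _ hzz
    have hFm : g * sh (-1) (Fm g m) = Fm g m * sh (-(m : K)) g := by
      linear_combination -hFm'
    obtain ⟨c, hc⟩ := L1 hg m heq' hFm (Fm_ne_zero hg m)
    rw [hc, psi_smul, ← zpow_psi]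
    exact Subalgebra.smul_mem _ (Subalgebra.pow_mem _ (Algebra.self_mem_adjoin_singleton K _) m) c

theorem component_commute {z w : Weyl K} {e : ℤ} (hze : z ∈ WeylD K e)
    (hw : z * w = w * z) :
    ∃ c : ℤ →₀ Weyl K, (∀ t, c t ∈ WeylD K t) ∧ (c.sum fun _ x => x) = w ∧
      ∀ t, z * c t = c t * z := by
  obtain ⟨c, hc, hsum⟩ := (Submodule.mem_iSup_iff_exists_finsupp _ _).mp (top_mem w)
  refine ⟨c, hc, hsum, ?_⟩
  intro t₀
  set v : ℤ →₀ Weyl K := c.mapRange (fun x => z * x - x * z) (by simp) with hv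
  have hvt : ∀ t, v t ∈ WeylD K (t + e) := by
    intro t
    rw [hv, Finsupp.mapRange_apply]
    apply Submodule.sub_mem
    · have := memD_mul hze (hc t)
      convert this using 2
      omega
    · exact memD_mul (hc t) hze
  have hvs : (v.sum fun _ x => x) = 0 := by
    rw [hv, Finsupp.sum_mapRange_index (by simp)]
    have h2 : (c.sum fun _ x => z * x - x * z)
        = z * (c.sum fun _ x => x) - (c.sum fun _ x => x) * z := by
      rw [Finsupp.mul_sum, Finsupp.sum_mul, ← Finsupp.sum_sub]
    rw [h2, hsum, hw, sub_self]
  have hd := direct e v hvt hvs t₀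
  rw [hv, Finsupp.mapRange_apply] at hd
  exact sub_eq_zero.mp hd

end WeylAux

open WeylAux in
/-- If `z` is a nonzero homogeneous element of degree `1` or `-1` in `A₁`, then the
centralizer of `z` in `A₁` equals `K[z]`. -/
theorem weyl_centralizer_of_degree_pm_one (K : Type) [Field K] [CharZero K]
    (z : Weyl K) (hz : z ≠ 0) (hhom : z ∈ WeylD K 1 ∨ z ∈ WeylD K (-1)) :
    {w : Weyl K | z * w = w * z} = ↑(Algebra.adjoin K {z}) := by
  ext w
  simp only [Set.mem_setOf_eq, SetLike.mem_coe]
  constructor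
  · intro hw
    rcases hhom with hz1 | hzm1
    · obtain ⟨g, hzg⟩ := mem_phi_of_memD (t := 1) (by exact_mod_cast hz1)
      have hg : g ≠ 0 := fun h => hz (by rw [hzg, h, phi_zero])
      obtain ⟨c, hc, hsum, hcomm⟩ := component_commute hz1 hw
      rw [← hsum]
      apply AddSubmonoidClass.finsuppSum_mem
      intro t _
      subst hzg
      exact compA hg (hc t) (hcomm t)
    · obtain ⟨g, hzg⟩ := mem_psi_of_memD (m := 1) (by exact_mod_cast hzm1)
      have hg : g ≠ 0 := fun h => hz (by rw [hzg, h, psi_zero])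
      obtain ⟨c, hc, hsum, hcomm⟩ := component_commute hzm1 hw
      rw [← hsum]
      apply AddSubmonoidClass.finsuppSum_mem
      intro t _
      subst hzg
      exact compB hg (hc t) (hcomm t)
  · intro hw
    induction hw using Algebra.adjoin_induction with
    | mem x hx =>
      rw [Set.mem_singleton_iff] at hx
      rw [hx]
    | algebraMap r => exact (Algebra.commutes r z).symm
    | add x y hx hy ihx ihy => rw [mul_add, add_mul, ihx, ihy]
    | mul x y hx hy ihx ihy => rw [← mul_assoc, ihx, mul_assoc, ihy, ← mul_assoc]
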